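/- arXiv:0910.1306 — 5 statements merged into one kernel-verified Lean document; each statement's English description precedes it below -/
import Mathlib

section
/- Commutativity of the bicategorical trace: Let B be a bicategory with a shadow ⟦−⟧, let (M, M∨, η_M, ε_M) and (N, N∨, η_N, ε_N) be dual pairs with M, N : R → S, and let f : M → N and g : N → M be 2-cells. Then tr(g ∘ f) = tr(f ∘ g) as morphisms ⟦U_R⟧ → ⟦U_S⟧, where g ∘ f : M → M is regarded as a 2-cell U_R ⊙ M → M ⊙ U_S via the unitors and traced with respect to (M, M∨), and similarly f ∘ g with respect to (N, N∨). -/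
open CategoryTheory Category Bicategory

universe w v u w' v' u' v₁ u₁ v₂ u₂

/-- The data of a candidate dual pair in a bicategory (horizontal composition written in
diagrammatic order): 1-cells `M : R ⟶ S` and `Mv : S ⟶ R` together with a coevaluation
`η : 𝟙 R ⟶ M ≫ Mv` and an evaluation `ε : Mv ≫ M ⟶ 𝟙 S`. -/
structure BicatDualData {B : Type u} [Bicategory.{w, v} B] (R S : B) where
  M : R ⟶ S
  Mv : S ⟶ R
  η : 𝟙 R ⟶ M ≫ Mv
  eps : Mv ≫ M ⟶ 𝟙 S

/-- The two triangle identities, saying that `(M, Mv, η, ε)` is a dual pair, i.e. that `M`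
is right dualizable with right dual `Mv`. -/
def BicatDualData.IsDualPair {B : Type u} [Bicategory.{w, v} B] {R S : B}
    (D : BicatDualData R S) : Prop :=
  ((λ_ D.M).inv ≫ (D.η ▷ D.M) ≫ (α_ D.M D.Mv D.M).hom ≫ (D.M ◁ D.eps) ≫ (ρ_ D.M).hom
      = 𝟙 D.M) ∧
  ((ρ_ D.Mv).inv ≫ (D.Mv ◁ D.η) ≫ (α_ D.Mv D.M D.Mv).inv ≫ (D.eps ▷ D.Mv) ≫ (λ_ D.Mv).hom
      = 𝟙 D.Mv)

/-- A shadow on a bicategory `B` with values in a category `V`: functors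
`⟦-⟧ : B(R,R) ⥤ V` for every 0-cell `R`, together with natural isomorphisms
`θ_{M,N} : ⟦M ≫ N⟧ ≅ ⟦N ≫ M⟧` satisfying the hexagon and unit axioms. -/
structure Shadow (B : Type u) [Bicategory.{w, v} B] (V : Type u₁) [Category.{v₁} V] where
  sh : ∀ R : B, (R ⟶ R) ⥤ V
  θ : ∀ {R S : B} (M : R ⟶ S) (N : S ⟶ R), (sh R).obj (M ≫ N) ≅ (sh S).obj (N ≫ M)
  θ_natural : ∀ {R S : B} {M M' : R ⟶ S} {N N' : S ⟶ R} (f : M ⟶ M') (g : N ⟶ N'),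
    (sh R).map (f ▷ N ≫ M' ◁ g) ≫ (θ M' N').hom
      = (θ M N).hom ≫ (sh S).map (g ▷ M ≫ N' ◁ f)
  hexagon : ∀ {R S T : B} (M : R ⟶ S) (N : S ⟶ T) (P : T ⟶ R),
    (θ (M ≫ N) P).hom ≫ (sh T).map (α_ P M N).inv
      = (sh R).map (α_ M N P).hom ≫ (θ M (N ≫ P)).hom ≫ (sh S).map (α_ N P M).hom ≫
          (θ N (P ≫ M)).hom
  unit_right : ∀ {R : B} (M : R ⟶ R),
    (θ M (𝟙 R)).hom ≫ (sh R).map (λ_ M).hom = (sh R).map (ρ_ M).hom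
  unit_left : ∀ {R : B} (M : R ⟶ R),
    (θ (𝟙 R) M).hom ≫ (sh R).map (ρ_ M).hom = (sh R).map (λ_ M).hom

/-- The bicategorical trace of a 2-cell `f : Q ≫ M ⟶ M ≫ P` (`Q : R ⟶ R`, `P : S ⟶ S`)
with respect to a (candidate) dual pair `(M, Mv, η, ε)`, relative to a shadow: the composite
`⟦Q⟧ ≅ ⟦Q ⊙ U_R⟧ → ⟦Q ⊙ (M ⊙ M∨)⟧ ≅ ⟦(Q ⊙ M) ⊙ M∨⟧ → ⟦(M ⊙ P) ⊙ M∨⟧ ≅θ ⟦M∨ ⊙ (M ⊙ P)⟧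
≅ ⟦(M∨ ⊙ M) ⊙ P⟧ → ⟦U_S ⊙ P⟧ ≅ ⟦P⟧`. -/
def btrace {B : Type u} [Bicategory.{w, v} B] {V : Type u₁} [Category.{v₁} V]
    (sh : Shadow B V) {R S : B} (D : BicatDualData R S) {Q : R ⟶ R} {P : S ⟶ S}
    (f : Q ≫ D.M ⟶ D.M ≫ P) : (sh.sh R).obj Q ⟶ (sh.sh S).obj P :=
  (sh.sh R).map ((ρ_ Q).inv ≫ (Q ◁ D.η) ≫ (α_ Q D.M D.Mv).inv ≫ (f ▷ D.Mv)) ≫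
    (sh.θ (D.M ≫ P) D.Mv).hom ≫
    (sh.sh S).map ((α_ D.Mv D.M P).inv ≫ (D.eps ▷ P) ≫ (λ_ P).hom)

namespace BtraceCommAux

open CategoryTheory Category Bicategory

section Mates

variable {B : Type u} [Bicategory.{w, v} B]
variable {R S : B} (M : R ⟶ S) (Mv : S ⟶ R) (η1 : 𝟙 R ⟶ M ≫ Mv) (ε1 : Mv ≫ M ⟶ 𝟙 S)
variable (N : R ⟶ S) (Nv : S ⟶ R) (η2 : 𝟙 R ⟶ N ≫ Nv) (ε2 : Nv ≫ N ⟶ 𝟙 S)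
variable (f : M ⟶ N)

/-- The mate of a 2-cell `f : M ⟶ N` with respect to dual data. -/
def mate : Nv ⟶ Mv :=
  (ρ_ Nv).inv ≫ (Nv ◁ η1) ≫ (α_ Nv M Mv).inv ≫ ((Nv ◁ f) ▷ Mv) ≫ (ε2 ▷ Mv) ≫ (λ_ Mv).hom

theorem mate_coev (hN1 : leftZigzag η2 ε2 = (λ_ N).hom ≫ (ρ_ N).inv) :
    η2 ≫ N ◁ mate M Mv η1 N Nv ε2 f = η1 ≫ f ▷ Mv := by
  dsimp only [mate]
  calc
    _ = 𝟙 _ ⊗≫ (η2 ▷ 𝟙 R ≫ (N ≫ Nv) ◁ η1) ⊗≫ N ◁ (Nv ◁ f) ▷ Mv ⊗≫ (N ◁ ε2) ▷ Mv ⊗≫ 𝟙 _ := by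
      bicategory
    _ = 𝟙 _ ⊗≫ 𝟙 R ◁ η1 ⊗≫ (η2 ▷ (M ≫ Mv) ≫ (N ≫ Nv) ◁ (f ▷ Mv)) ⊗≫ (N ◁ ε2) ▷ Mv ⊗≫ 𝟙 _ := by
      rw [← whisker_exchange]; bicategory
    _ = 𝟙 _ ⊗≫ 𝟙 R ◁ η1 ⊗≫ (𝟙 R ◁ (f ▷ Mv) ≫ η2 ▷ (N ≫ Mv)) ⊗≫ (N ◁ ε2) ▷ Mv ⊗≫ 𝟙 _ := by
      rw [whisker_exchange]
    _ = 𝟙 _ ⊗≫ 𝟙 R ◁ (η1 ≫ f ▷ Mv) ⊗≫ (leftZigzag η2 ε2) ▷ Mv ⊗≫ 𝟙 _ := by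
      bicategory
    _ = η1 ≫ f ▷ Mv := by
      rw [hN1]; bicategory

theorem mate_ev (hM1 : leftZigzag η1 ε1 = (λ_ M).hom ≫ (ρ_ M).inv) :
    (mate M Mv η1 N Nv ε2 f ▷ M) ≫ ε1 = (Nv ◁ f) ≫ ε2 := by
  dsimp only [mate]
  calc
    _ = 𝟙 _ ⊗≫ Nv ◁ η1 ▷ M ⊗≫ (Nv ◁ f) ▷ (Mv ≫ M) ≫ (ε2 ▷ (Mv ≫ M) ≫ 𝟙 S ◁ ε1) ⊗≫ 𝟙 _ := by
      bicategory
    _ = 𝟙 _ ⊗≫ Nv ◁ η1 ▷ M ⊗≫ ((Nv ◁ f) ▷ (Mv ≫ M) ≫ (Nv ≫ N) ◁ ε1) ⊗≫ ε2 ⊗≫ 𝟙 _ := by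
      rw [← whisker_exchange ε2 ε1]; bicategory
    _ = 𝟙 _ ⊗≫ Nv ◁ η1 ▷ M ⊗≫ ((Nv ≫ M) ◁ ε1 ≫ (Nv ◁ f) ▷ 𝟙 S) ⊗≫ ε2 ⊗≫ 𝟙 _ := by
      rw [← whisker_exchange (Nv ◁ f) ε1]
    _ = 𝟙 _ ⊗≫ Nv ◁ (leftZigzag η1 ε1) ⊗≫ (Nv ◁ f) ⊗≫ ε2 := by
      bicategory
    _ = (Nv ◁ f) ≫ ε2 := by
      rw [hM1]; bicategory

end Mates

section ShadowLemmas

variable {B : Type u} [Bicategory.{w, v} B] {V : Type u₁} [Category.{v₁} V]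
variable (sh : Shadow B V) {R S : B}

theorem theta_nat_left {M M' : R ⟶ S} (u : M ⟶ M') (X : S ⟶ R) :
    (sh.sh R).map (u ▷ X) ≫ (sh.θ M' X).hom = (sh.θ M X).hom ≫ (sh.sh S).map (X ◁ u) := by
  simpa using sh.θ_natural u (𝟙 X)

theorem theta_nat_right {X X' : S ⟶ R} (M : R ⟶ S) (u : X ⟶ X') :
    (sh.sh R).map (M ◁ u) ≫ (sh.θ M X').hom = (sh.θ M X).hom ≫ (sh.sh S).map (u ▷ M) := by
  simpa using sh.θ_natural (𝟙 M) u

theorem btrace_unit (D : BicatDualData R S) (φ : D.M ⟶ D.M) :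
    btrace sh D ((λ_ D.M).hom ≫ φ ≫ (ρ_ D.M).inv)
      = (sh.sh R).map (D.η ≫ φ ▷ D.Mv) ≫ (sh.θ D.M D.Mv).hom ≫ (sh.sh S).map D.eps := by
  have hA : (ρ_ (𝟙 R)).inv ≫ (𝟙 R ◁ D.η) ≫ (α_ (𝟙 R) D.M D.Mv).inv ≫
        (((λ_ D.M).hom ≫ φ ≫ (ρ_ D.M).inv) ▷ D.Mv)
      = (D.η ≫ φ ▷ D.Mv) ≫ ((ρ_ D.M).inv ▷ D.Mv) := by
    bicategory
  have hC : D.Mv ◁ (ρ_ D.M).inv ≫ (α_ D.Mv D.M (𝟙 S)).inv ≫ (D.eps ▷ 𝟙 S) ≫ (λ_ (𝟙 S)).hom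
      = D.eps := by
    bicategory
  have hnat := theta_nat_left sh (ρ_ D.M).inv D.Mv
  dsimp only [btrace]
  rw [hA, Functor.map_comp, assoc, reassoc_of% hnat, ← Functor.map_comp, hC]

end ShadowLemmas

end BtraceCommAux

/-- Commutativity of the bicategorical trace: for dual pairs `(M, M∨)` and `(N, N∨)` with
`M, N : R ⟶ S` and 2-cells `f : M ⟶ N`, `g : N ⟶ M`, one has `tr(g ∘ f) = tr(f ∘ g)` as
morphisms `⟦U_R⟧ ⟶ ⟦U_S⟧`, where `g ∘ f` is regarded as a 2-cell `U_R ⊙ M ⟶ M ⊙ U_S`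
via the unitors and traced with respect to `(M, M∨)`, and similarly for `f ∘ g`. -/
theorem btrace_comm {B : Type u} [Bicategory.{w, v} B] {V : Type u₁}
    [Category.{v₁} V] (sh : Shadow B V) {R S : B}
    (DM DN : BicatDualData R S) (hM : DM.IsDualPair) (hN : DN.IsDualPair)
    (f : DM.M ⟶ DN.M) (g : DN.M ⟶ DM.M) :
    btrace sh DM ((λ_ DM.M).hom ≫ (f ≫ g) ≫ (ρ_ DM.M).inv)
      = btrace sh DN ((λ_ DN.M).hom ≫ (g ≫ f) ≫ (ρ_ DN.M).inv) := by
  have hM1 : leftZigzag DM.η DM.eps = (λ_ DM.M).hom ≫ (ρ_ DM.M).inv := by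
    calc leftZigzag DM.η DM.eps
        = (λ_ DM.M).hom ≫ ((λ_ DM.M).inv ≫ (DM.η ▷ DM.M) ≫ (α_ DM.M DM.Mv DM.M).hom ≫
            (DM.M ◁ DM.eps) ≫ (ρ_ DM.M).hom) ≫ (ρ_ DM.M).inv := by bicategory
      _ = _ := by rw [hM.1]; simp
  have hN1 : leftZigzag DN.η DN.eps = (λ_ DN.M).hom ≫ (ρ_ DN.M).inv := by
    calc leftZigzag DN.η DN.eps
        = (λ_ DN.M).hom ≫ ((λ_ DN.M).inv ≫ (DN.η ▷ DN.M) ≫ (α_ DN.M DN.Mv DN.M).hom ≫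
            (DN.M ◁ DN.eps) ≫ (ρ_ DN.M).hom) ≫ (ρ_ DN.M).inv := by bicategory
      _ = _ := by rw [hN.1]; simp
  set fv := BtraceCommAux.mate DM.M DM.Mv DM.η DN.M DN.Mv DN.eps f with hfv
  rw [BtraceCommAux.btrace_unit, BtraceCommAux.btrace_unit]
  -- right-hand side
  conv_rhs => rw [Functor.map_comp, assoc,
    reassoc_of% (BtraceCommAux.theta_nat_left sh (g ≫ f) DN.Mv)]
  -- left-hand side
  conv_lhs => rw [comp_whiskerRight, Functor.map_comp, Functor.map_comp, assoc, assoc,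
    reassoc_of% (BtraceCommAux.theta_nat_left sh g DM.Mv),
    ← Functor.map_comp_assoc,
    ← BtraceCommAux.mate_coev DM.M DM.Mv DM.η DN.M DN.Mv DN.η DN.eps f hN1,
    ← hfv, Functor.map_comp, assoc,
    reassoc_of% (BtraceCommAux.theta_nat_right sh DN.M fv)]
  congr 2
  rw [← Functor.map_comp_assoc, ← whisker_exchange fv g, Functor.map_comp_assoc,
    ← Functor.map_comp, hfv,
    BtraceCommAux.mate_ev DM.M DM.Mv DM.η DM.eps DN.M DN.Mv DN.eps f hM1,
    Functor.map_comp, Bicategory.whiskerLeft_comp, Functor.map_comp, assoc]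
end

section
/- The trace of a mate: Let B be a bicategory with a shadow ⟦−⟧, let (M, M∨, η, ε) be a dual pair with M : R → S, and let f : Q ⊙ M → M ⊙ P be a 2-cell (Q : R → R, P : S → S). Let f∨ : M∨ ⊙ Q → P ⊙ M∨ be the mate of f, namely the composite M∨ ⊙ Q → M∨ ⊙ Q ⊙ (M ⊙ M∨) → M∨ ⊙ (M ⊙ P) ⊙ M∨ → (U_S ⊙ P) ⊙ M∨ ≅ P ⊙ M∨ given by whiskerings of η, f, and ε (with structural isomorphisms inserted). Then tr(f) = tr′(f∨) : ⟦Q⟧ → ⟦P⟧, where tr′(f∨) denotes the left-dual trace: the composite ⟦Q⟧ ≅ ⟦U_R ⊙ Q⟧ → ⟦(M ⊙ M∨) ⊙ Q⟧ ≅ ⟦M ⊙ (M∨ ⊙ Q)⟧ → ⟦M ⊙ (P ⊙ M∨)⟧ →θ_{M, P⊙M∨} ⟦(P ⊙ M∨) ⊙ M⟧ ≅ ⟦P ⊙ (M∨ ⊙ M)⟧ → ⟦P ⊙ U_S⟧ ≅ ⟦P⟧ given by whiskerings of η, f∨, and ε. -/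
open CategoryTheory Category Bicategory

universe w v u w' v' u' v₁ u₁ v₂ u₂

/-- The mate `f∨ : M∨ ⊙ Q ⟶ P ⊙ M∨` of a 2-cell `f : Q ⊙ M ⟶ M ⊙ P`, given by the
composite `M∨ ⊙ Q ⟶ M∨ ⊙ Q ⊙ (M ⊙ M∨) ⟶ M∨ ⊙ (M ⊙ P) ⊙ M∨ ⟶ (U_S ⊙ P) ⊙ M∨ ≅ P ⊙ M∨`
via whiskerings of `η`, `f`, and `ε` (structural isomorphisms inserted). -/
def bimate {B : Type u} [Bicategory.{w, v} B] {R S : B} (D : BicatDualData R S)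
    {Q : R ⟶ R} {P : S ⟶ S} (f : Q ≫ D.M ⟶ D.M ≫ P) : D.Mv ≫ Q ⟶ P ≫ D.Mv :=
  (ρ_ (D.Mv ≫ Q)).inv ≫ ((D.Mv ≫ Q) ◁ D.η) ≫ (α_ (D.Mv ≫ Q) D.M D.Mv).inv ≫
    ((α_ D.Mv Q D.M).hom ▷ D.Mv) ≫ ((D.Mv ◁ f) ▷ D.Mv) ≫
    ((α_ D.Mv D.M P).inv ▷ D.Mv) ≫ ((D.eps ▷ P) ▷ D.Mv) ≫ ((λ_ P).hom ▷ D.Mv)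


private lemma bimate_key {B : Type u} [Bicategory.{w, v} B] {R S : B} (D : BicatDualData R S)
    (hD : D.IsDualPair) {Q : R ⟶ R} {P : S ⟶ S} (f : Q ≫ D.M ⟶ D.M ≫ P) :
    (λ_ Q).inv ≫ (D.η ▷ Q) ≫ (α_ D.M D.Mv Q).hom ≫ (D.M ◁ bimate D f)
      = (ρ_ Q).inv ≫ (Q ◁ D.η) ≫ (α_ Q D.M D.Mv).inv ≫ (f ▷ D.Mv) ≫
          (α_ D.M P D.Mv).hom := by
  calc (λ_ Q).inv ≫ (D.η ▷ Q) ≫ (α_ D.M D.Mv Q).hom ≫ (D.M ◁ bimate D f)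
      = (λ_ Q).inv ≫ (D.η ▷ Q) ≫
          ((D.M ≫ D.Mv) ◁ ((ρ_ Q).inv ≫ (Q ◁ D.η) ≫ (α_ Q D.M D.Mv).inv ≫ (f ▷ D.Mv) ≫
            (α_ D.M P D.Mv).hom)) ≫
          (α_ D.M D.Mv (D.M ≫ (P ≫ D.Mv))).hom ≫
          (D.M ◁ (α_ D.Mv D.M (P ≫ D.Mv)).inv) ≫
          (D.M ◁ (D.eps ▷ (P ≫ D.Mv))) ≫ (D.M ◁ (λ_ (P ≫ D.Mv)).hom) := by
        dsimp only [bimate]; bicategory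
    _ = (λ_ Q).inv ≫
          (𝟙 R ◁ ((ρ_ Q).inv ≫ (Q ◁ D.η) ≫ (α_ Q D.M D.Mv).inv ≫ (f ▷ D.Mv) ≫
            (α_ D.M P D.Mv).hom)) ≫
          (D.η ▷ (D.M ≫ (P ≫ D.Mv))) ≫
          (α_ D.M D.Mv (D.M ≫ (P ≫ D.Mv))).hom ≫
          (D.M ◁ (α_ D.Mv D.M (P ≫ D.Mv)).inv) ≫
          (D.M ◁ (D.eps ▷ (P ≫ D.Mv))) ≫ (D.M ◁ (λ_ (P ≫ D.Mv)).hom) := by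
        rw [← whisker_exchange_assoc]
    _ = (ρ_ Q).inv ≫ (Q ◁ D.η) ≫ (α_ Q D.M D.Mv).inv ≫ (f ▷ D.Mv) ≫
          (α_ D.M P D.Mv).hom ≫
          (((λ_ D.M).inv ≫ (D.η ▷ D.M) ≫ (α_ D.M D.Mv D.M).hom ≫ (D.M ◁ D.eps) ≫
            (ρ_ D.M).hom) ▷ (P ≫ D.Mv)) := by
        bicategory
    _ = _ := by rw [hD.1]; simp

/-- The trace of a mate: `tr(f) = tr′(f∨)`, where `tr′` denotes the left-dual trace
`⟦Q⟧ ≅ ⟦U_R ⊙ Q⟧ → ⟦(M ⊙ M∨) ⊙ Q⟧ ≅ ⟦M ⊙ (M∨ ⊙ Q)⟧ → ⟦M ⊙ (P ⊙ M∨)⟧ ≅θ ⟦(P ⊙ M∨) ⊙ M⟧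
≅ ⟦P ⊙ (M∨ ⊙ M)⟧ → ⟦P ⊙ U_S⟧ ≅ ⟦P⟧`. -/
theorem btrace_mate {B : Type u} [Bicategory.{w, v} B] {V : Type u₁}
    [Category.{v₁} V] (sh : Shadow B V) {R S : B}
    (D : BicatDualData R S) (hD : D.IsDualPair)
    {Q : R ⟶ R} {P : S ⟶ S} (f : Q ≫ D.M ⟶ D.M ≫ P) :
    btrace sh D f
      = (sh.sh R).map ((λ_ Q).inv ≫ (D.η ▷ Q) ≫ (α_ D.M D.Mv Q).hom ≫
            (D.M ◁ bimate D f)) ≫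
          (sh.θ D.M (P ≫ D.Mv)).hom ≫
          (sh.sh S).map ((α_ P D.Mv D.M).hom ≫ (P ◁ D.eps) ≫ (ρ_ P).hom) := by
  have hnat : (sh.θ P (D.Mv ≫ D.M)).hom ≫ (sh.sh S).map (D.eps ▷ P)
      = (sh.sh S).map (P ◁ D.eps) ≫ (sh.θ P (𝟙 S)).hom := by
    have h := sh.θ_natural (𝟙 P) D.eps
    simp only [id_whiskerRight, Bicategory.whiskerLeft_id, comp_id, id_comp] at h
    exact h.symm
  have tail : (sh.θ (D.M ≫ P) D.Mv).hom ≫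
        (sh.sh S).map ((α_ D.Mv D.M P).inv ≫ (D.eps ▷ P) ≫ (λ_ P).hom)
      = (sh.sh R).map (α_ D.M P D.Mv).hom ≫ (sh.θ D.M (P ≫ D.Mv)).hom ≫
          (sh.sh S).map ((α_ P D.Mv D.M).hom ≫ (P ◁ D.eps) ≫ (ρ_ P).hom) := by
    calc (sh.θ (D.M ≫ P) D.Mv).hom ≫
          (sh.sh S).map ((α_ D.Mv D.M P).inv ≫ (D.eps ▷ P) ≫ (λ_ P).hom)
        = ((sh.θ (D.M ≫ P) D.Mv).hom ≫ (sh.sh S).map (α_ D.Mv D.M P).inv) ≫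
            (sh.sh S).map (D.eps ▷ P) ≫ (sh.sh S).map (λ_ P).hom := by
          simp [Functor.map_comp]
      _ = ((sh.sh R).map (α_ D.M P D.Mv).hom ≫ (sh.θ D.M (P ≫ D.Mv)).hom ≫
            (sh.sh S).map (α_ P D.Mv D.M).hom ≫ (sh.θ P (D.Mv ≫ D.M)).hom) ≫
            (sh.sh S).map (D.eps ▷ P) ≫ (sh.sh S).map (λ_ P).hom := by
          rw [sh.hexagon]
      _ = (sh.sh R).map (α_ D.M P D.Mv).hom ≫ (sh.θ D.M (P ≫ D.Mv)).hom ≫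
            (sh.sh S).map (α_ P D.Mv D.M).hom ≫
            ((sh.θ P (D.Mv ≫ D.M)).hom ≫ (sh.sh S).map (D.eps ▷ P)) ≫
            (sh.sh S).map (λ_ P).hom := by
          simp only [assoc]
      _ = (sh.sh R).map (α_ D.M P D.Mv).hom ≫ (sh.θ D.M (P ≫ D.Mv)).hom ≫
            (sh.sh S).map (α_ P D.Mv D.M).hom ≫
            ((sh.sh S).map (P ◁ D.eps) ≫ (sh.θ P (𝟙 S)).hom) ≫
            (sh.sh S).map (λ_ P).hom := by
          rw [hnat]
      _ = (sh.sh R).map (α_ D.M P D.Mv).hom ≫ (sh.θ D.M (P ≫ D.Mv)).hom ≫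
            (sh.sh S).map (α_ P D.Mv D.M).hom ≫
            (sh.sh S).map (P ◁ D.eps) ≫ (sh.sh S).map (ρ_ P).hom := by
          simp only [assoc]; rw [sh.unit_right]
      _ = _ := by simp [Functor.map_comp]
  calc btrace sh D f
      = (sh.sh R).map ((ρ_ Q).inv ≫ (Q ◁ D.η) ≫ (α_ Q D.M D.Mv).inv ≫ (f ▷ D.Mv)) ≫
          (sh.θ (D.M ≫ P) D.Mv).hom ≫
          (sh.sh S).map ((α_ D.Mv D.M P).inv ≫ (D.eps ▷ P) ≫ (λ_ P).hom) := rfl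
    _ = (sh.sh R).map ((ρ_ Q).inv ≫ (Q ◁ D.η) ≫ (α_ Q D.M D.Mv).inv ≫ (f ▷ D.Mv)) ≫
          (sh.sh R).map (α_ D.M P D.Mv).hom ≫ (sh.θ D.M (P ≫ D.Mv)).hom ≫
          (sh.sh S).map ((α_ P D.Mv D.M).hom ≫ (P ◁ D.eps) ≫ (ρ_ P).hom) := by
        rw [tail]
    _ = (sh.sh R).map ((ρ_ Q).inv ≫ (Q ◁ D.η) ≫ (α_ Q D.M D.Mv).inv ≫ (f ▷ D.Mv) ≫
          (α_ D.M P D.Mv).hom) ≫ (sh.θ D.M (P ≫ D.Mv)).hom ≫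
          (sh.sh S).map ((α_ P D.Mv D.M).hom ≫ (P ◁ D.eps) ≫ (ρ_ P).hom) := by
        simp [Functor.map_comp]
    _ = _ := by rw [← bimate_key D hD f]
end

section
/- Preservation of duals by lax functors of bicategories: Let F : B → C be a lax functor of bicategories, let (M, M∨, η, ε) be a dual pair in B with M : R → S, and assume that the structural 2-cells i_R : U_{F(R)} → F(U_R), i_S : U_{F(S)} → F(U_S), and c_{M,M∨} : F(M) ⊙ F(M∨) → F(M ⊙ M∨) are invertible. Then (F(M), F(M∨)) is a dual pair in C, with coevaluation c_{M,M∨}⁻¹ ∘ F(η) ∘ i_R : U_{F(R)} → F(M) ⊙ F(M∨) and evaluation i_S⁻¹ ∘ F(ε) ∘ c_{M∨,M} : F(M∨) ⊙ F(M) → U_{F(S)}; that is, these two 2-cells satisfy the triangle identities. -/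
open CategoryTheory Category Bicategory

universe w v u w' v' u' v₁ u₁ v₂ u₂

/-- The image duality data of `(M, M∨, η, ε)` under a lax functor `F` whose relevant
structural 2-cells are invertible: the coevaluation is `c_{M,M∨}⁻¹ ∘ F(η) ∘ i_R` and the
evaluation is `i_S⁻¹ ∘ F(ε) ∘ c_{M∨,M}`. -/
noncomputable abbrev laxImage {B : Type u} {C : Type u'} [Bicategory.{w, v} B]
    [Bicategory.{w', v'} C] (F : LaxFunctor B C) {R S : B} (D : BicatDualData R S)
    [IsIso (F.mapId R)] [IsIso (F.mapId S)] [IsIso (F.mapComp D.M D.Mv)] :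
    BicatDualData (F.obj R) (F.obj S) where
  M := F.map D.M
  Mv := F.map D.Mv
  η := F.mapId R ≫ F.map₂ D.η ≫ inv (F.mapComp D.M D.Mv)
  eps := F.mapComp D.Mv D.M ≫ F.map₂ D.eps ≫ inv (F.mapId S)

private lemma whisker_inv_iS_rho {B : Type u} {C : Type u'} [Bicategory.{w, v} B]
    [Bicategory.{w', v'} C] (F : LaxFunctor B C) {R S : B} (D : BicatDualData R S)
    [IsIso (F.mapId S)] :
    F.map D.M ◁ inv (F.mapId S) ≫ (ρ_ (F.map D.M)).hom
      = F.mapComp D.M (𝟙 S) ≫ F.map₂ (ρ_ D.M).hom := by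
  rw [F.map₂_rightUnitor_hom, ← Bicategory.whiskerLeft_comp_assoc, IsIso.inv_hom_id,
    Bicategory.whiskerLeft_id, id_comp]

private lemma whisker_inv_iS_lambda {B : Type u} {C : Type u'} [Bicategory.{w, v} B]
    [Bicategory.{w', v'} C] (F : LaxFunctor B C) {R S : B} (D : BicatDualData R S)
    [IsIso (F.mapId S)] :
    inv (F.mapId S) ▷ F.map D.Mv ≫ (λ_ (F.map D.Mv)).hom
      = F.mapComp (𝟙 S) D.Mv ≫ F.map₂ (λ_ D.Mv).hom := by
  rw [F.map₂_leftUnitor_hom, ← comp_whiskerRight_assoc, IsIso.inv_hom_id,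
    id_whiskerRight, id_comp]

/-- Preservation of duals by lax functors of bicategories: if `(M, M∨, η, ε)` is a dual
pair in `B` and the structural 2-cells `i_R`, `i_S`, and `c_{M,M∨}` of the lax functor `F`
are invertible, then `(F M, F M∨)` with coevaluation `c_{M,M∨}⁻¹ ∘ F(η) ∘ i_R` and
evaluation `i_S⁻¹ ∘ F(ε) ∘ c_{M∨,M}` satisfies the triangle identities. -/
theorem laxFunctor_preserves_duals {B : Type u} {C : Type u'} [Bicategory.{w, v} B]
    [Bicategory.{w', v'} C] (F : LaxFunctor B C) {R S : B}
    (D : BicatDualData R S) (hD : D.IsDualPair)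
    [IsIso (F.mapId R)] [IsIso (F.mapId S)] [IsIso (F.mapComp D.M D.Mv)] :
    (laxImage F D).IsDualPair := by
  obtain ⟨h1, h2⟩ := hD
  constructor
  · simp only [laxImage, comp_whiskerRight, Bicategory.whiskerLeft_comp, assoc]
    rw [whisker_inv_iS_rho F D, ← F.mapComp_naturality_right_assoc,
      F.mapComp_assoc_right_assoc, Iso.hom_inv_id_assoc,
      ← comp_whiskerRight_assoc (inv (F.mapComp D.M D.Mv)) (F.mapComp D.M D.Mv),
      IsIso.inv_hom_id, id_whiskerRight, id_comp,
      ← F.mapComp_naturality_left_assoc, ← F.map₂_leftUnitor_assoc,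
      ← F.map₂_comp, ← F.map₂_comp, ← F.map₂_comp, ← F.map₂_comp, h1, F.map₂_id]
  · simp only [laxImage, comp_whiskerRight, Bicategory.whiskerLeft_comp, assoc]
    rw [whisker_inv_iS_lambda F D, ← F.mapComp_naturality_left_assoc,
      F.mapComp_assoc_left_assoc, Iso.inv_hom_id_assoc,
      ← Bicategory.whiskerLeft_comp_assoc (F.map D.Mv) (inv (F.mapComp D.M D.Mv)),
      IsIso.inv_hom_id, Bicategory.whiskerLeft_id, id_comp,
      ← F.mapComp_naturality_right_assoc, ← F.map₂_rightUnitor_assoc,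
      ← F.map₂_comp, ← F.map₂_comp, ← F.map₂_comp, ← F.map₂_comp, h2, F.map₂_id]
end

section
/- Functoriality of the bicategorical trace: Let B and C be bicategories equipped with shadows ⟦−⟧_B and ⟦−⟧_C valued in categories T and Z respectively, and let (F, F_tr, φ) be a lax shadow functor from B to C. Let (M, M∨, η, ε) be a dual pair in B with M : R → S such that i_R, i_S, and c_{M,M∨} are invertible, and let f : Q ⊙ M → M ⊙ P be a 2-cell (Q : R → R, P : S → S) such that c_{M,P} is invertible. Then F_tr(tr(f)) ∘ φ_Q = φ_P ∘ tr(c_{M,P}⁻¹ ∘ F(f) ∘ c_{Q,M}) as morphisms ⟦F(Q)⟧_C → F_tr(⟦P⟧_B), where the trace on the right is taken in C with respect to the dual pair (F(M), F(M∨)) with coevaluation c_{M,M∨}⁻¹ ∘ F(η) ∘ i_R and evaluation i_S⁻¹ ∘ F(ε) ∘ c_{M∨,M}. -/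
open CategoryTheory Category Bicategory

universe w v u w' v' u' v₁ u₁ v₂ u₂

/-- A lax shadow functor between bicategories with shadows: a lax functor `F : B ⟶ C`
together with a functor `Ftr : T ⥤ Z` between the value categories of the shadows and a
natural transformation `φ` with components `φ_M : ⟦F M⟧_C ⟶ Ftr ⟦M⟧_B` for `M : R ⟶ R`,
compatible with the shadow isomorphisms `θ`. -/
structure LaxShadowFunctor {B : Type u} {C : Type u'} [Bicategory.{w, v} B]
    [Bicategory.{w', v'} C] {T : Type u₁} [Category.{v₁} T] {Z : Type u₂} [Category.{v₂} Z]
    (shB : Shadow B T) (shC : Shadow C Z) where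
  F : LaxFunctor B C
  Ftr : T ⥤ Z
  φ : ∀ {R : B} (M : R ⟶ R), (shC.sh (F.obj R)).obj (F.map M) ⟶ Ftr.obj ((shB.sh R).obj M)
  φ_natural : ∀ {R : B} {M N : R ⟶ R} (f : M ⟶ N),
    (shC.sh (F.obj R)).map (F.map₂ f) ≫ φ N = φ M ≫ Ftr.map ((shB.sh R).map f)
  φ_comp : ∀ {R S : B} (M : R ⟶ S) (N : S ⟶ R),
    (shC.sh (F.obj R)).map (F.mapComp M N) ≫ φ (M ≫ N) ≫ Ftr.map (shB.θ M N).hom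
      = (shC.θ (F.map M) (F.map N)).hom ≫ (shC.sh (F.obj S)).map (F.mapComp N M) ≫
          φ (N ≫ M)

/-- Functoriality of the bicategorical trace: for a lax shadow functor `(F, Ftr, φ)`, a
dual pair `(M, M∨, η, ε)` with `i_R`, `i_S`, `c_{M,M∨}` invertible, and a 2-cell
`f : Q ⊙ M ⟶ M ⊙ P` with `c_{M,P}` invertible,
`Ftr(tr f) ∘ φ_Q = φ_P ∘ tr(c_{M,P}⁻¹ ∘ F(f) ∘ c_{Q,M})`, the right-hand trace being
taken with respect to the induced dual pair `(F M, F M∨)`. -/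
theorem laxShadowFunctor_preserves_trace {B : Type u} {C : Type u'} [Bicategory.{w, v} B]
    [Bicategory.{w', v'} C] {T : Type u₁} [Category.{v₁} T] {Z : Type u₂} [Category.{v₂} Z]
    (shB : Shadow B T) (shC : Shadow C Z) (E : LaxShadowFunctor shB shC)
    {R S : B} (D : BicatDualData R S) (hD : D.IsDualPair)
    [IsIso (E.F.mapId R)] [IsIso (E.F.mapId S)] [IsIso (E.F.mapComp D.M D.Mv)]
    {Q : R ⟶ R} {P : S ⟶ S} (f : Q ≫ D.M ⟶ D.M ≫ P) [IsIso (E.F.mapComp D.M P)] :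
    E.φ Q ≫ E.Ftr.map (btrace shB D f)
      = btrace shC (laxImage E.F D)
          (E.F.mapComp Q D.M ≫ E.F.map₂ f ≫ inv (E.F.mapComp D.M P)) ≫ E.φ P := by
  have hassoc : E.F.mapComp Q (D.M ≫ D.Mv) ≫ E.F.map₂ (α_ Q D.M D.Mv).inv
      = (E.F.map Q ◁ inv (E.F.mapComp D.M D.Mv)) ≫
        (α_ (E.F.map Q) (E.F.map D.M) (E.F.map D.Mv)).inv ≫
        (E.F.mapComp Q D.M ▷ E.F.map D.Mv) ≫ E.F.mapComp (Q ≫ D.M) D.Mv := by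
    rw [E.F.mapComp_assoc_left]
    simp [← Bicategory.inv_whiskerLeft]
  have hassoc' := reassoc_of% hassoc
  have hA : E.F.map₂ ((ρ_ Q).inv ≫ (Q ◁ D.η) ≫ (α_ Q D.M D.Mv).inv ≫ (f ▷ D.Mv))
      = ((ρ_ (E.F.map Q)).inv ≫
          (E.F.map Q ◁ (E.F.mapId R ≫ E.F.map₂ D.η ≫ inv (E.F.mapComp D.M D.Mv))) ≫
          (α_ (E.F.map Q) (E.F.map D.M) (E.F.map D.Mv)).inv ≫
          ((E.F.mapComp Q D.M ≫ E.F.map₂ f ≫ inv (E.F.mapComp D.M P)) ▷ E.F.map D.Mv)) ≫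
        (E.F.mapComp D.M P ▷ E.F.map D.Mv) ≫ E.F.mapComp (D.M ≫ P) D.Mv := by
    simp only [PrelaxFunctor.map₂_comp, assoc, Bicategory.comp_whiskerRight,
      Bicategory.whiskerLeft_comp, IsIso.inv_hom_id_assoc, E.F.map₂_rightUnitor,
      E.F.mapComp_naturality_right_assoc, E.F.mapComp_naturality_left,
      E.F.mapComp_naturality_left_assoc, hassoc', ← Bicategory.inv_whiskerRight]
  have hB : (E.F.map D.Mv ◁ E.F.mapComp D.M P) ≫ E.F.mapComp D.Mv (D.M ≫ P) ≫
        E.F.map₂ ((α_ D.Mv D.M P).inv ≫ (D.eps ▷ P) ≫ (λ_ P).hom)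
      = (α_ (E.F.map D.Mv) (E.F.map D.M) (E.F.map P)).inv ≫
          ((E.F.mapComp D.Mv D.M ≫ E.F.map₂ D.eps ≫ inv (E.F.mapId S)) ▷ E.F.map P) ≫
          (λ_ (E.F.map P)).hom := by
    rw [E.F.map₂_leftUnitor_hom]
    simp only [PrelaxFunctor.map₂_comp, assoc, E.F.mapComp_assoc_right_assoc,
      PrelaxFunctor.map₂_hom_inv_assoc, E.F.mapComp_naturality_left_assoc,
      Bicategory.comp_whiskerRight, ← Bicategory.inv_whiskerRight, IsIso.inv_hom_id_assoc]
  have hθ : (shC.sh (E.F.obj R)).map (E.F.mapComp D.M P ▷ E.F.map D.Mv) ≫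
        (shC.θ (E.F.map (D.M ≫ P)) (E.F.map D.Mv)).hom
      = (shC.θ (E.F.map D.M ≫ E.F.map P) (E.F.map D.Mv)).hom ≫
        (shC.sh (E.F.obj S)).map (E.F.map D.Mv ◁ E.F.mapComp D.M P) := by
    have h := shC.θ_natural (E.F.mapComp D.M P) (𝟙 (E.F.map D.Mv))
    simpa using h
  have hB2 : (shC.sh (E.F.obj S)).map (E.F.map D.Mv ◁ E.F.mapComp D.M P) ≫
        (shC.sh (E.F.obj S)).map (E.F.mapComp D.Mv (D.M ≫ P)) ≫
        (shC.sh (E.F.obj S)).map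
          (E.F.map₂ ((α_ D.Mv D.M P).inv ≫ (D.eps ▷ P) ≫ (λ_ P).hom))
      = (shC.sh (E.F.obj S)).map
          ((α_ (E.F.map D.Mv) (E.F.map D.M) (E.F.map P)).inv ≫
            ((E.F.mapComp D.Mv D.M ≫ E.F.map₂ D.eps ≫ inv (E.F.mapId S)) ▷ E.F.map P) ≫
            (λ_ (E.F.map P)).hom) := by
    simp only [← Functor.map_comp, assoc]
    rw [hB]
  calc E.φ Q ≫ E.Ftr.map (btrace shB D f)
      = E.φ Q ≫
          E.Ftr.map ((shB.sh R).map
            ((ρ_ Q).inv ≫ (Q ◁ D.η) ≫ (α_ Q D.M D.Mv).inv ≫ (f ▷ D.Mv))) ≫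
          E.Ftr.map (shB.θ (D.M ≫ P) D.Mv).hom ≫
          E.Ftr.map ((shB.sh S).map ((α_ D.Mv D.M P).inv ≫ (D.eps ▷ P) ≫ (λ_ P).hom)) := by
        simp [btrace]
    _ = (shC.sh (E.F.obj R)).map
            (E.F.map₂ ((ρ_ Q).inv ≫ (Q ◁ D.η) ≫ (α_ Q D.M D.Mv).inv ≫ (f ▷ D.Mv))) ≫
          E.φ ((D.M ≫ P) ≫ D.Mv) ≫
          E.Ftr.map (shB.θ (D.M ≫ P) D.Mv).hom ≫
          E.Ftr.map ((shB.sh S).map ((α_ D.Mv D.M P).inv ≫ (D.eps ▷ P) ≫ (λ_ P).hom)) := by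
        rw [reassoc_of% (E.φ_natural
          ((ρ_ Q).inv ≫ (Q ◁ D.η) ≫ (α_ Q D.M D.Mv).inv ≫ (f ▷ D.Mv)))]
    _ = (shC.sh (E.F.obj R)).map
            ((ρ_ (E.F.map Q)).inv ≫
              (E.F.map Q ◁ (E.F.mapId R ≫ E.F.map₂ D.η ≫ inv (E.F.mapComp D.M D.Mv))) ≫
              (α_ (E.F.map Q) (E.F.map D.M) (E.F.map D.Mv)).inv ≫
              ((E.F.mapComp Q D.M ≫ E.F.map₂ f ≫ inv (E.F.mapComp D.M P)) ▷ E.F.map D.Mv)) ≫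
          (shC.sh (E.F.obj R)).map (E.F.mapComp D.M P ▷ E.F.map D.Mv) ≫
          (shC.sh (E.F.obj R)).map (E.F.mapComp (D.M ≫ P) D.Mv) ≫
          E.φ ((D.M ≫ P) ≫ D.Mv) ≫
          E.Ftr.map (shB.θ (D.M ≫ P) D.Mv).hom ≫
          E.Ftr.map ((shB.sh S).map ((α_ D.Mv D.M P).inv ≫ (D.eps ▷ P) ≫ (λ_ P).hom)) := by
        rw [hA]
        simp only [Functor.map_comp, assoc]
    _ = (shC.sh (E.F.obj R)).map
            ((ρ_ (E.F.map Q)).inv ≫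
              (E.F.map Q ◁ (E.F.mapId R ≫ E.F.map₂ D.η ≫ inv (E.F.mapComp D.M D.Mv))) ≫
              (α_ (E.F.map Q) (E.F.map D.M) (E.F.map D.Mv)).inv ≫
              ((E.F.mapComp Q D.M ≫ E.F.map₂ f ≫ inv (E.F.mapComp D.M P)) ▷ E.F.map D.Mv)) ≫
          (shC.sh (E.F.obj R)).map (E.F.mapComp D.M P ▷ E.F.map D.Mv) ≫
          (shC.θ (E.F.map (D.M ≫ P)) (E.F.map D.Mv)).hom ≫
          (shC.sh (E.F.obj S)).map (E.F.mapComp D.Mv (D.M ≫ P)) ≫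
          E.φ (D.Mv ≫ D.M ≫ P) ≫
          E.Ftr.map ((shB.sh S).map ((α_ D.Mv D.M P).inv ≫ (D.eps ▷ P) ≫ (λ_ P).hom)) := by
        rw [reassoc_of% (E.φ_comp (D.M ≫ P) D.Mv)]
    _ = (shC.sh (E.F.obj R)).map
            ((ρ_ (E.F.map Q)).inv ≫
              (E.F.map Q ◁ (E.F.mapId R ≫ E.F.map₂ D.η ≫ inv (E.F.mapComp D.M D.Mv))) ≫
              (α_ (E.F.map Q) (E.F.map D.M) (E.F.map D.Mv)).inv ≫
              ((E.F.mapComp Q D.M ≫ E.F.map₂ f ≫ inv (E.F.mapComp D.M P)) ▷ E.F.map D.Mv)) ≫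
          (shC.θ (E.F.map D.M ≫ E.F.map P) (E.F.map D.Mv)).hom ≫
          (shC.sh (E.F.obj S)).map (E.F.map D.Mv ◁ E.F.mapComp D.M P) ≫
          (shC.sh (E.F.obj S)).map (E.F.mapComp D.Mv (D.M ≫ P)) ≫
          E.φ (D.Mv ≫ D.M ≫ P) ≫
          E.Ftr.map ((shB.sh S).map ((α_ D.Mv D.M P).inv ≫ (D.eps ▷ P) ≫ (λ_ P).hom)) := by
        rw [reassoc_of% hθ]
    _ = (shC.sh (E.F.obj R)).map
            ((ρ_ (E.F.map Q)).inv ≫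
              (E.F.map Q ◁ (E.F.mapId R ≫ E.F.map₂ D.η ≫ inv (E.F.mapComp D.M D.Mv))) ≫
              (α_ (E.F.map Q) (E.F.map D.M) (E.F.map D.Mv)).inv ≫
              ((E.F.mapComp Q D.M ≫ E.F.map₂ f ≫ inv (E.F.mapComp D.M P)) ▷ E.F.map D.Mv)) ≫
          (shC.θ (E.F.map D.M ≫ E.F.map P) (E.F.map D.Mv)).hom ≫
          (shC.sh (E.F.obj S)).map (E.F.map D.Mv ◁ E.F.mapComp D.M P) ≫
          (shC.sh (E.F.obj S)).map (E.F.mapComp D.Mv (D.M ≫ P)) ≫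
          (shC.sh (E.F.obj S)).map
            (E.F.map₂ ((α_ D.Mv D.M P).inv ≫ (D.eps ▷ P) ≫ (λ_ P).hom)) ≫
          E.φ P := by
        rw [← E.φ_natural ((α_ D.Mv D.M P).inv ≫ (D.eps ▷ P) ≫ (λ_ P).hom)]
    _ = (shC.sh (E.F.obj R)).map
            ((ρ_ (E.F.map Q)).inv ≫
              (E.F.map Q ◁ (E.F.mapId R ≫ E.F.map₂ D.η ≫ inv (E.F.mapComp D.M D.Mv))) ≫
              (α_ (E.F.map Q) (E.F.map D.M) (E.F.map D.Mv)).inv ≫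
              ((E.F.mapComp Q D.M ≫ E.F.map₂ f ≫ inv (E.F.mapComp D.M P)) ▷ E.F.map D.Mv)) ≫
          (shC.θ (E.F.map D.M ≫ E.F.map P) (E.F.map D.Mv)).hom ≫
          (shC.sh (E.F.obj S)).map
            ((α_ (E.F.map D.Mv) (E.F.map D.M) (E.F.map P)).inv ≫
              ((E.F.mapComp D.Mv D.M ≫ E.F.map₂ D.eps ≫ inv (E.F.mapId S)) ▷ E.F.map P) ≫
              (λ_ (E.F.map P)).hom) ≫
          E.φ P := by
        rw [reassoc_of% hB2]
    _ = btrace shC (laxImage E.F D)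
          (E.F.mapComp Q D.M ≫ E.F.map₂ f ≫ inv (E.F.mapComp D.M P)) ≫ E.φ P := by
        simp [btrace]
end

section
/- Independence of the bicategorical trace from the choice of dual: Let B be a bicategory with a shadow ⟦−⟧, let M : R → S be a 1-cell, and let (M, M∨, η, ε) and (M, M∨′, η′, ε′) be two dual pairs exhibiting right duals of M. Then for any 2-cell f : Q ⊙ M → M ⊙ P (Q : R → R, P : S → S), the trace of f computed with the dual pair (M, M∨, η, ε) equals the trace of f computed with the dual pair (M, M∨′, η′, ε′), as morphisms ⟦Q⟧ → ⟦P⟧. -/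
open CategoryTheory Category Bicategory

universe w v u w' v' u' v₁ u₁ v₂ u₂

/-- Independence of the bicategorical trace from the choice of right dual: if
`(M, Mv, η, ε)` and `(M, Mv', η', ε')` are two dual pairs exhibiting right duals of the
same 1-cell `M : R ⟶ S`, then for any 2-cell `f : Q ⊙ M ⟶ M ⊙ P` the traces computed
with the two dual pairs agree. -/
theorem btrace_independent_of_dual {B : Type u} [Bicategory.{w, v} B] {V : Type u₁}
    [Category.{v₁} V] (sh : Shadow B V) {R S : B} (M : R ⟶ S) (Mv Mv' : S ⟶ R)
    (η : 𝟙 R ⟶ M ≫ Mv) (eps : Mv ≫ M ⟶ 𝟙 S)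
    (η' : 𝟙 R ⟶ M ≫ Mv') (eps' : Mv' ≫ M ⟶ 𝟙 S)
    (h : (⟨M, Mv, η, eps⟩ : BicatDualData R S).IsDualPair)
    (h' : (⟨M, Mv', η', eps'⟩ : BicatDualData R S).IsDualPair)
    {Q : R ⟶ R} {P : S ⟶ S} (f : Q ≫ M ⟶ M ≫ P) :
    btrace sh ⟨M, Mv, η, eps⟩ f = btrace sh ⟨M, Mv', η', eps'⟩ f := by
  obtain ⟨h1, _⟩ := h
  obtain ⟨h1', _⟩ := h'
  set φ : Mv ⟶ Mv' :=
    (ρ_ Mv).inv ≫ Mv ◁ η' ≫ (α_ Mv M Mv').inv ≫ eps ▷ Mv' ≫ (λ_ Mv').hom with hφ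
  -- `φ` intertwines the coevaluations:
  have hA : η ≫ M ◁ φ = η' := by
    rw [hφ]
    calc η ≫ M ◁ ((ρ_ Mv).inv ≫ Mv ◁ η' ≫ (α_ Mv M Mv').inv ≫ eps ▷ Mv' ≫ (λ_ Mv').hom)
        = 𝟙 _ ⊗≫ (𝟙 R ◁ η' ≫ η ▷ (M ≫ Mv')) ⊗≫ M ◁ eps ▷ Mv' ⊗≫ 𝟙 _ := by
          rw [whisker_exchange]; bicategory
      _ = η' ⊗≫ ((λ_ M).inv ≫ (η ▷ M) ≫ (α_ M Mv M).hom ≫ (M ◁ eps) ≫ (ρ_ M).hom) ▷ Mv'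
            ⊗≫ 𝟙 _ := by bicategory
      _ = η' := by rw [h1]; bicategory
  -- `φ` intertwines the evaluations:
  have hB : φ ▷ M ≫ eps' = eps := by
    rw [hφ]
    calc ((ρ_ Mv).inv ≫ Mv ◁ η' ≫ (α_ Mv M Mv').inv ≫ eps ▷ Mv' ≫ (λ_ Mv').hom) ▷ M ≫ eps'
        = 𝟙 _ ⊗≫ Mv ◁ (η' ▷ M) ⊗≫ ((Mv ≫ M) ◁ eps' ≫ eps ▷ 𝟙 S) ⊗≫ 𝟙 _ := by
          rw [whisker_exchange]; bicategory
      _ = 𝟙 _ ⊗≫ Mv ◁ ((λ_ M).inv ≫ (η' ▷ M) ≫ (α_ M Mv' M).hom ≫ (M ◁ eps') ≫ (ρ_ M).hom)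
            ⊗≫ eps := by bicategory
      _ = eps := by rw [h1']; bicategory
  -- the first leg of the primed trace factors through the unprimed one, via `φ`:
  have key1 : (ρ_ Q).inv ≫ Q ◁ η' ≫ (α_ Q M Mv').inv ≫ f ▷ Mv'
      = ((ρ_ Q).inv ≫ Q ◁ η ≫ (α_ Q M Mv).inv ≫ f ▷ Mv) ≫ (M ≫ P) ◁ φ := by
    rw [← hA]
    calc (ρ_ Q).inv ≫ Q ◁ (η ≫ M ◁ φ) ≫ (α_ Q M Mv').inv ≫ f ▷ Mv'
        = 𝟙 _ ⊗≫ Q ◁ η ⊗≫ ((Q ≫ M) ◁ φ ≫ f ▷ Mv') ⊗≫ 𝟙 _ := by bicategory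
      _ = ((ρ_ Q).inv ≫ Q ◁ η ≫ (α_ Q M Mv).inv ≫ f ▷ Mv) ≫ (M ≫ P) ◁ φ := by
          rw [whisker_exchange]; bicategory
  -- the last leg of the unprimed trace factors through the primed one, via `φ`:
  have key2 : φ ▷ (M ≫ P) ≫ (α_ Mv' M P).inv ≫ eps' ▷ P ≫ (λ_ P).hom
      = (α_ Mv M P).inv ≫ eps ▷ P ≫ (λ_ P).hom := by
    rw [← hB]
    bicategory
  -- naturality of the shadow isomorphism `θ` in `φ`:
  have hnat := sh.θ_natural (𝟙 (M ≫ P)) φ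
  simp only [id_whiskerRight, Bicategory.whiskerLeft_id, id_comp, comp_id] at hnat
  -- assemble:
  simp only [btrace]
  rw [key1, ← key2]
  simp only [Functor.map_comp, assoc]
  rw [reassoc_of% hnat]
end
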